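/- Let [a,b] = ⋃_{i∈𝕀} F_i be a partition into pairwise disjoint nonempty closed sets with 𝕀 ⊆ ℕ of cardinality at least two. Let I ⊆ [a,b] be a nonempty closed interval and 𝕁 ⊆ 𝕀 a set of cardinality at least two such that I ∩ F_j ≠ ∅ for all j ∈ 𝕁 and I ∩ F_j = ∅ for all j ∈ 𝕀 \ 𝕁. Then there exist a closed interval I' ⊆ I and 𝕁' ⊆ 𝕁 of cardinality at least two such that min 𝕁 ∉ 𝕁', I' ∩ F_j ≠ ∅ for all j ∈ 𝕁', and I' ∩ F_j = ∅ for all j ∈ 𝕀 \ 𝕁'. -/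
import Mathlib

/-- Key step: if `x ∈ Fk`, `y ∈ Fn` with `x < y`, `Fn`, `Fk` closed and disjoint, then
there is `u ∈ [x, y)` lying in neither set such that `[x,u]` misses `Fn` entirely. -/
lemma sierpinski_key (Fn Fk : Set ℝ) (hFn : IsClosed Fn) (hFk : IsClosed Fk)
    (hd : Disjoint Fk Fn) (x y : ℝ) (hxy : x < y) (hx : x ∈ Fk) (hy : y ∈ Fn) :
    ∃ u, x ≤ u ∧ u < y ∧ u ∉ Fk ∧ ∀ s ∈ Set.Icc x u, s ∉ Fn := by
  set S : Set ℝ := Fn ∩ Set.Icc x y with hS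
  have hSne : S.Nonempty := ⟨y, hy, le_of_lt hxy, le_refl y⟩
  have hSbdd : BddBelow S := ⟨x, fun s hs => hs.2.1⟩
  have hSclosed : IsClosed S := hFn.inter isClosed_Icc
  set t := sInf S with ht
  have htS : t ∈ S := hSclosed.csInf_mem hSne hSbdd
  have hxFn : x ∉ Fn := fun h => (hd.ne_of_mem hx h) rfl
  have hxt : x < t := lt_of_le_of_ne htS.2.1 (fun h => hxFn (h ▸ htS.1))
  have hty : t ≤ y := htS.2.2
  have : ¬ (Set.Ico x t ⊆ Fk) := by
    intro h
    have h1 : Set.Icc x t ⊆ Fk := by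
      have := closure_mono h
      rw [closure_Ico hxt.ne, hFk.closure_eq] at this
      exact this
    exact (hd.ne_of_mem (h1 ⟨le_of_lt hxt, le_refl t⟩) htS.1) rfl
  obtain ⟨u, hu, huk⟩ := Set.not_subset.mp this
  refine ⟨u, hu.1, lt_of_lt_of_le hu.2 hty, huk, ?_⟩
  intro s hs hsFn
  have hst : s < t := lt_of_le_of_lt hs.2 hu.2
  have : s ∈ S := ⟨hsFn, hs.1, le_of_lt (lt_of_lt_of_le hst hty)⟩
  exact absurd (csInf_le hSbdd this) (not_le.mpr hst)

/-- The inductive step in the proof of Sierpiński's theorem: given a partition of `[a,b]`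
into pairwise disjoint nonempty closed sets `F_i`, `i ∈ 𝕀`, and a closed interval
`I = [c,d] ⊆ [a,b]` meeting exactly the `F_j` for `j` in a set `𝕁` of cardinality at
least two, there are a closed subinterval `I' ⊆ I` and `𝕁' ⊆ 𝕁` of cardinality at least
two with `min 𝕁 ∉ 𝕁'` such that `I'` meets exactly the `F_j` with `j ∈ 𝕁'`. -/
theorem sierpinski_inductive_step (a b : ℝ) (hab : a < b)
    (𝕀 : Set ℕ) (h𝕀 : 𝕀.Nontrivial) (F : ℕ → Set ℝ)
    (hne : ∀ i ∈ 𝕀, (F i).Nonempty)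
    (hclosed : ∀ i ∈ 𝕀, IsClosed (F i))
    (hdisj : ∀ i ∈ 𝕀, ∀ j ∈ 𝕀, i ≠ j → Disjoint (F i) (F j))
    (hcover : ⋃ i ∈ 𝕀, F i = Set.Icc a b)
    (c d : ℝ) (hcd : c ≤ d) (hsub : Set.Icc c d ⊆ Set.Icc a b)
    (𝕁 : Set ℕ) (h𝕁𝕀 : 𝕁 ⊆ 𝕀) (h𝕁 : 𝕁.Nontrivial)
    (hmeet : ∀ j ∈ 𝕁, (Set.Icc c d ∩ F j).Nonempty)
    (hmiss : ∀ j ∈ 𝕀 \ 𝕁, Set.Icc c d ∩ F j = ∅) :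
    ∃ c' d', c ≤ c' ∧ c' ≤ d' ∧ d' ≤ d ∧
      ∃ 𝕁' ⊆ 𝕁, 𝕁'.Nontrivial ∧ sInf 𝕁 ∉ 𝕁' ∧
        (∀ j ∈ 𝕁', (Set.Icc c' d' ∩ F j).Nonempty) ∧
        (∀ j ∈ 𝕀 \ 𝕁', Set.Icc c' d' ∩ F j = ∅) := by
  set n := sInf 𝕁 with hn
  have hn𝕁 : n ∈ 𝕁 := Nat.sInf_mem h𝕁.nonempty
  obtain ⟨k, hk𝕁, hkn⟩ := h𝕁.exists_ne n
  obtain ⟨y, hy, hyFn⟩ := hmeet n hn𝕁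
  obtain ⟨x, hx, hxFk⟩ := hmeet k hk𝕁
  have hFkn : Disjoint (F k) (F n) := hdisj k (h𝕁𝕀 hk𝕁) n (h𝕁𝕀 hn𝕁) hkn
  have hFnc : IsClosed (F n) := hclosed n (h𝕁𝕀 hn𝕁)
  have hFkc : IsClosed (F k) := hclosed k (h𝕁𝕀 hk𝕁)
  have hxy : x ≠ y := fun h => (hFkn.ne_of_mem hxFk hyFn) h
  -- Common finishing move: given `c' ≤ d'` within `[c,d]`, with `x' ∈ [c',d'] ∩ F k`,
  -- `u ∈ [c',d']` outside `F k` and `[c',d'] ∩ F n = ∅`, conclude.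
  have finish : ∀ c' d', c ≤ c' → c' ≤ d' → d' ≤ d →
      (Set.Icc c' d' ∩ F k).Nonempty →
      (∃ u ∈ Set.Icc c' d', u ∉ F k) →
      (∀ s ∈ Set.Icc c' d', s ∉ F n) →
      ∃ c' d', c ≤ c' ∧ c' ≤ d' ∧ d' ≤ d ∧
      ∃ 𝕁' ⊆ 𝕁, 𝕁'.Nontrivial ∧ sInf 𝕁 ∉ 𝕁' ∧
        (∀ j ∈ 𝕁', (Set.Icc c' d' ∩ F j).Nonempty) ∧
        (∀ j ∈ 𝕀 \ 𝕁', Set.Icc c' d' ∩ F j = ∅) := by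
    intro c' d' hcc' hc'd' hd'd hkmeet ⟨u, hu, huk⟩ hnomeet
    have hsub' : Set.Icc c' d' ⊆ Set.Icc c d :=
      Set.Icc_subset_Icc hcc' hd'd
    -- u belongs to some F m, m ∈ 𝕀
    have hu_ab : u ∈ Set.Icc a b := hsub (hsub' hu)
    have : u ∈ ⋃ i ∈ 𝕀, F i := hcover ▸ hu_ab
    obtain ⟨m, hm𝕀, humF⟩ := Set.mem_iUnion₂.mp this
    have hm𝕁 : m ∈ 𝕁 := by
      by_contra hmJ
      have := hmiss m ⟨hm𝕀, hmJ⟩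
      exact absurd this (Set.nonempty_iff_ne_empty.mp ⟨u, hsub' hu, humF⟩)
    have hmk : m ≠ k := fun h => huk (h ▸ humF)
    refine ⟨c', d', hcc', hc'd', hd'd,
      {j ∈ 𝕁 | (Set.Icc c' d' ∩ F j).Nonempty}, fun j hj => hj.1, ?_, ?_, ?_, ?_⟩
    · exact ⟨m, ⟨hm𝕁, ⟨u, hu, humF⟩⟩, k, ⟨hk𝕁, hkmeet⟩, hmk⟩
    · rintro ⟨-, s, hs, hsFn⟩
      exact hnomeet s hs hsFn
    · exact fun j hj => hj.2
    · rintro j ⟨hj𝕀, hj⟩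
      by_contra hne'
      have hjne : (Set.Icc c' d' ∩ F j).Nonempty := Set.nonempty_iff_ne_empty.mpr hne'
      by_cases hj𝕁 : j ∈ 𝕁
      · exact hj ⟨hj𝕁, hjne⟩
      · obtain ⟨s, hs, hsF⟩ := hjne
        have := hmiss j ⟨hj𝕀, hj𝕁⟩
        exact absurd this (Set.nonempty_iff_ne_empty.mp ⟨s, hsub' hs, hsF⟩)
  rcases lt_or_gt_of_ne hxy with h | h
  · obtain ⟨u, hxu, huy, huk, hnoFn⟩ :=
      sierpinski_key (F n) (F k) hFnc hFkc hFkn x y h hxFk hyFn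
    exact finish x u hx.1 hxu (le_trans (le_of_lt huy) hy.2)
      ⟨x, ⟨le_refl x, hxu⟩, hxFk⟩ ⟨u, ⟨hxu, le_refl u⟩, huk⟩ hnoFn
  · -- y < x : reflect through negation
    obtain ⟨u, hxu, huy, huk, hnoFn⟩ :=
      sierpinski_key (Neg.neg ⁻¹' (F n)) (Neg.neg ⁻¹' (F k))
        (hFnc.preimage continuous_neg) (hFkc.preimage continuous_neg)
        (hFkn.preimage _) (-x) (-y) (neg_lt_neg h)
        (by simpa using hxFk) (by simpa using hyFn)
    refine finish (-u) x (le_trans hy.1 (by linarith [huy])) (by linarith [hxu]) hx.2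
      ⟨x, ⟨by linarith [hxu], le_refl x⟩, hxFk⟩
      ⟨-u, ⟨le_refl _, by linarith [hxu]⟩, by simpa using huk⟩ ?_
    intro s hs hsFn
    exact hnoFn (-s) ⟨by linarith [hs.2], by linarith [hs.1]⟩ (by simpa using hsFn)
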